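/- Let Y and Y′ be independent, identically distributed real random variables whose common law μ is atomless, has cumulative distribution function F, finite first moment, and is such that x ↦ x·F(x) is μ-integrable. Then (1/2)·E[|Y − Y′|] = 2·E[Y·F(Y)] − E[Y]. -/

import Mathlib

open MeasureTheory

/-- Energy-score identity: for i.i.d. `Y, Y′` with atomless common law `μ` and CDF `F`,
`(1/2)·E[|Y − Y′|] = 2·E[Y·F(Y)] − E[Y]`. -/
theorem half_expected_abs_diff_eq
    {Ω : Type*} [MeasurableSpace Ω] (P : Measure Ω) [IsProbabilityMeasure P]
    (Y Y' : Ω → ℝ) (hY : Measurable Y) (hY' : Measurable Y')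
    (hIndep : ProbabilityTheory.IndepFun Y Y' P)
    (μ : Measure ℝ) (hmap : P.map Y = μ) (hmap' : P.map Y' = μ)
    (hAtomless : ∀ x : ℝ, μ {x} = 0)
    (F : ℝ → ℝ) (hF : ∀ t, F t = (μ (Set.Iic t)).toReal)
    (hInt : Integrable id μ)
    (hInt2 : Integrable (fun x => x * F x) μ) :
    (1 / 2) * (∫ ω, |Y ω - Y' ω| ∂P) = 2 * (∫ x, x * F x ∂μ) - ∫ x, x ∂μ := by
  haveI hμprob : IsProbabilityMeasure μ := hmap ▸ Measure.isProbabilityMeasure_map hY.aemeasurable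
  have hId : Integrable (fun x : ℝ => x) μ := hInt
  -- joint law
  have hprod : P.map (fun ω => (Y ω, Y' ω)) = μ.prod μ := by
    rw [(ProbabilityTheory.indepFun_iff_map_prod_eq_prod_map_map hY.aemeasurable
      hY'.aemeasurable).mp hIndep, hmap, hmap']
  -- transfer the expectation to the product measure
  have habs : (∫ ω, |Y ω - Y' ω| ∂P) = ∫ p : ℝ × ℝ, |p.1 - p.2| ∂(μ.prod μ) := by
    rw [← hprod, integral_map (f := fun p : ℝ × ℝ => |p.1 - p.2|) (hY.prodMk hY').aemeasurable
      ((continuous_fst.sub continuous_snd).abs.aestronglyMeasurable)]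
  -- integrability of the coordinates on the product
  have hmfst : (μ.prod μ).map Prod.fst = μ := by
    simp [Measure.map_fst_prod]
  have hmsnd : (μ.prod μ).map Prod.snd = μ := by
    simp [Measure.map_snd_prod]
  have hfst : Integrable (fun p : ℝ × ℝ => p.1) (μ.prod μ) := by
    have h := (integrable_map_measure (f := Prod.fst) (g := fun x : ℝ => x)
      (by rw [hmfst]; exact hId.aestronglyMeasurable) measurable_fst.aemeasurable).mp
      (by rw [hmfst]; exact hId)
    exact h
  have hsnd : Integrable (fun p : ℝ × ℝ => p.2) (μ.prod μ) := by
    have h := (integrable_map_measure (f := Prod.snd) (g := fun x : ℝ => x)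
      (by rw [hmsnd]; exact hId.aestronglyMeasurable) measurable_snd.aemeasurable).mp
      (by rw [hmsnd]; exact hId)
    exact h
  have hG : Integrable (fun p : ℝ × ℝ => max (p.1 - p.2) 0) (μ.prod μ) :=
    (hfst.sub hsnd).pos_part
  have hG' : Integrable (fun p : ℝ × ℝ => max (p.2 - p.1) 0) (μ.prod μ) :=
    (hsnd.sub hfst).pos_part
  set I : ℝ := ∫ p : ℝ × ℝ, max (p.1 - p.2) 0 ∂(μ.prod μ) with hI
  -- the swapped positive part has the same integral
  have hswap : (∫ p : ℝ × ℝ, max (p.2 - p.1) 0 ∂(μ.prod μ)) = I := by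
    rw [hI, ← integral_prod_swap (fun p : ℝ × ℝ => max (p.1 - p.2) 0)]
    rfl
  -- |a - b| = (a-b)⁺ + (b-a)⁺
  have habs_split : (∫ p : ℝ × ℝ, |p.1 - p.2| ∂(μ.prod μ)) = I + I := by
    have : (fun p : ℝ × ℝ => |p.1 - p.2|)
        = fun p : ℝ × ℝ => max (p.1 - p.2) 0 + max (p.2 - p.1) 0 := by
      funext p
      rcases le_total p.2 p.1 with h | h
      · rw [abs_of_nonneg (by linarith), max_eq_left (by linarith),
          max_eq_right (by linarith)]; ring
      · rw [abs_of_nonpos (by linarith), max_eq_right (by linarith),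
          max_eq_left (by linarith)]; ring
    rw [this, integral_add hG hG', hswap]
  -- inner integral computation
  have hindic : ∀ x : ℝ, (fun y : ℝ => max (x - y) 0)
      = Set.indicator (Set.Iic x) (fun y => x - y) := by
    intro x
    funext y
    rcases le_or_gt y x with h | h
    · rw [Set.indicator_of_mem (Set.mem_Iic.mpr h), max_eq_left (by linarith)]
    · rw [Set.indicator_of_notMem (by simpa using h), max_eq_right (by linarith)]
  set g : ℝ → ℝ := fun x => ∫ y in Set.Iic x, y ∂μ with hg
  have hinner : ∀ x : ℝ, (∫ y, max (x - y) 0 ∂μ) = x * F x - g x := by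
    intro x
    rw [hindic x, integral_indicator measurableSet_Iic]
    rw [integral_sub (integrable_const x) (hId.restrict (s := Set.Iic x))]
    rw [setIntegral_const, measureReal_def, hF, smul_eq_mul, mul_comm]
  have hinner_int : Integrable (fun x => ∫ y, max (x - y) 0 ∂μ) μ :=
    hG.integral_prod_left
  have hg_int : Integrable g μ := by
    have : g = fun x => x * F x - (∫ y, max (x - y) 0 ∂μ) := by
      funext x; rw [hinner x]; ring
    rw [this]
    exact hInt2.sub hinner_int
  -- Fubini for I
  have hI_eq : I = (∫ x, x * F x ∂μ) - ∫ x, g x ∂μ := by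
    rw [hI, integral_prod _ hG]
    have : (fun x => ∫ y, max (x - y) 0 ∂μ) = fun x => x * F x - g x := by
      funext x; exact hinner x
    rw [this, integral_sub hInt2 hg_int]
  -- compute ∫ g by swapping the order of integration
  have hIci : ∀ y : ℝ, (μ (Set.Ici y)).toReal = 1 - F y := by
    intro y
    have h1 : μ (Set.Ici y) = μ (Set.Ioi y) := by
      apply le_antisymm
      · have : Set.Ici y ⊆ Set.Ioi y ∪ {y} := by
          intro z hz
          rcases eq_or_lt_of_le (Set.mem_Ici.mp hz) with h | h
          · exact Or.inr (by simp [h.symm])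
          · exact Or.inl h
        calc μ (Set.Ici y) ≤ μ (Set.Ioi y ∪ {y}) := measure_mono this
          _ ≤ μ (Set.Ioi y) + μ {y} := measure_union_le _ _
          _ = μ (Set.Ioi y) := by rw [hAtomless y, add_zero]
      · exact measure_mono Set.Ioi_subset_Ici_self
    have h2 : μ (Set.Ioi y) = 1 - μ (Set.Iic y) := by
      rw [← Set.compl_Iic, prob_compl_eq_one_sub measurableSet_Iic]
    rw [h1, h2, ENNReal.toReal_sub_of_le prob_le_one ENNReal.one_ne_top,
      ENNReal.toReal_one, hF]
  have hgx : ∀ x : ℝ, g x = ∫ y, Set.indicator (Set.Iic x) (fun y : ℝ => y) y ∂μ := by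
    intro x
    rw [integral_indicator measurableSet_Iic]
  have huncurry : Integrable (Function.uncurry fun x y : ℝ =>
      Set.indicator (Set.Iic x) (fun y : ℝ => y) y) (μ.prod μ) := by
    have heq : (Function.uncurry fun x y : ℝ => Set.indicator (Set.Iic x) (fun y : ℝ => y) y)
        = Set.indicator {p : ℝ × ℝ | p.2 ≤ p.1} (fun p => p.2) := by
      funext p
      rcases le_or_gt p.2 p.1 with h | h
      · rw [Function.uncurry]
        rw [Set.indicator_of_mem (Set.mem_Iic.mpr h), Set.indicator_of_mem (by exact h)]
      · rw [Function.uncurry]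
        rw [Set.indicator_of_notMem (by simpa using h),
          Set.indicator_of_notMem (by simpa using h)]
    rw [heq]
    exact hsnd.indicator (measurableSet_le measurable_snd measurable_fst)
  have hg_val : (∫ x, g x ∂μ) = (∫ x, x ∂μ) - ∫ x, x * F x ∂μ := by
    have h1 : (∫ x, g x ∂μ)
        = ∫ y, (∫ x, Set.indicator (Set.Iic x) (fun y : ℝ => y) y ∂μ) ∂μ := by
      rw [show (fun x => g x) = fun x => ∫ y, Set.indicator (Set.Iic x) (fun y : ℝ => y) y ∂μ
        from funext hgx]
      exact integral_integral_swap huncurry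
    have h2 : ∀ y : ℝ, (∫ x, Set.indicator (Set.Iic x) (fun y : ℝ => y) y ∂μ)
        = y - y * F y := by
      intro y
      have : (fun x => Set.indicator (Set.Iic x) (fun y : ℝ => y) y)
          = Set.indicator (Set.Ici y) (fun _ => y) := by
        funext x
        rcases le_or_gt y x with h | h
        · rw [Set.indicator_of_mem (Set.mem_Iic.mpr h),
            Set.indicator_of_mem (Set.mem_Ici.mpr h)]
        · rw [Set.indicator_of_notMem (by simpa using h),
            Set.indicator_of_notMem (by simpa using h)]
      rw [this, integral_indicator measurableSet_Ici, setIntegral_const, measureReal_def, hIci y,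
        smul_eq_mul]
      ring
    rw [h1, show (fun y => ∫ x, Set.indicator (Set.Iic x) (fun y : ℝ => y) y ∂μ)
      = fun y => y - y * F y from funext h2, integral_sub hId hInt2]
  -- conclude
  rw [habs, habs_split]
  rw [hg_val] at hI_eq
  linarith
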